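/- The map (w₁ ≥_R w₂ ≥_R ⋯ ≥_R w_m) ↦ (c w₁⁻¹, w₁w₂⁻¹, …, w_{m−1}w_m⁻¹, w_m) is a bijection between m-multichains in the noncrossing partition lattice NC(W,c) and sequences (δ₀, δ₁, …, δ_m) of elements of NC(W,c) satisfying δ₀δ₁⋯δ_m = c and Σᵢ ℓ_R(δᵢ) = ℓ_R(c), with inverse (δ₀,…,δ_m) ↦ (δ₁⋯δ_m ≥_R δ₂⋯δ_m ≥_R ⋯ ≥_R δ_m). -/

import Mathlib

namespace CoxeterSystem

variable {B W : Type*} [Group W] {M : CoxeterMatrix B} (cs : CoxeterSystem M W)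

/-- The absolute (reflection) length of `w`: the minimal length of an expression of `w`
as a product of reflections. -/
noncomputable def absLength (w : W) : ℕ :=
  sInf {n : ℕ | ∃ l : List W, (∀ t ∈ l, cs.IsReflection t) ∧ l.prod = w ∧ l.length = n}

/-- The absolute order on `W`: `u ≤_R w` iff `ℓ_R(u) + ℓ_R(u⁻¹w) = ℓ_R(w)`. -/
def absLe (u w : W) : Prop :=
  cs.absLength u + cs.absLength (u⁻¹ * w) = cs.absLength w

/-- `c` is a (standard) Coxeter element: the product of all the simple reflections, each
occurring exactly once, in some order. -/
def IsCoxeterElement (c : W) : Prop :=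
  ∃ l : List B, l.Nodup ∧ (∀ i : B, i ∈ l) ∧ cs.wordProd l = c

end CoxeterSystem

namespace CoxeterSystem

variable {B W : Type*} [Group W] {M : CoxeterMatrix B} (cs : CoxeterSystem M W)

/-- The set of `m`-multichains `w₁ ≥_R w₂ ≥_R ⋯ ≥_R w_m` in the noncrossing partition
lattice `NC(W, c)`, recorded as functions `Fin m → W` (so `w j` is `w_{j+1}`). -/
def multichainSet (m : ℕ) (c : W) : Set (Fin m → W) :=
  {w | (∀ j : Fin m, cs.absLe (w j) c) ∧
    ∀ j k : Fin m, j ≤ k → cs.absLe (w k) (w j)}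

/-- The set of `m`-delta sequences `(δ₀, δ₁, …, δ_m)`: tuples of elements of
`NC(W, c)` with `δ₀ δ₁ ⋯ δ_m = c` and `Σᵢ ℓ_R(δᵢ) = ℓ_R(c)`. -/
def deltaSet (m : ℕ) (c : W) : Set (Fin (m + 1) → W) :=
  {δ | (∀ i : Fin (m + 1), cs.absLe (δ i) c) ∧ (List.ofFn δ).prod = c ∧
    (∑ i : Fin (m + 1), cs.absLength (δ i)) = cs.absLength c}

end CoxeterSystem

section Maps

variable {W : Type*} [Group W]

/-- The extension of an `m`-multichain `w` to indices `ℕ`, with `w₀ := c` and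
`w_k := 1` for `k > m`. -/
def chainExt (m : ℕ) (c : W) (w : Fin m → W) : ℕ → W := fun k =>
  if h : 1 ≤ k ∧ k ≤ m then w ⟨k - 1, by omega⟩ else if k = 0 then c else 1

/-- The map sending an `m`-multichain `(w₁ ≥_R ⋯ ≥_R w_m)` to the delta sequence
`(c w₁⁻¹, w₁ w₂⁻¹, …, w_{m−1} w_m⁻¹, w_m)`. -/
def chainToDelta (m : ℕ) (c : W) (w : Fin m → W) : Fin (m + 1) → W := fun i =>
  chainExt m c w i.val * (chainExt m c w (i.val + 1))⁻¹

/-- The map sending a delta sequence `(δ₀, …, δ_m)` to the multichain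
`(δ₁⋯δ_m, δ₂⋯δ_m, …, δ_m)`. -/
def deltaToChain (m : ℕ) (δ : Fin (m + 1) → W) : Fin m → W := fun j =>
  ((List.range' (j.val + 1) (m - j.val)).map
    (fun k => if h : k < m + 1 then δ ⟨k, h⟩ else 1)).prod

end Maps


section AbsAux

namespace CoxeterSystem

variable {B W : Type*} [Group W] {M : CoxeterMatrix B} (cs : CoxeterSystem M W)

private lemma absLength_le' {w : W} {l : List W} (hl : ∀ t ∈ l, cs.IsReflection t)
    (hp : l.prod = w) : cs.absLength w ≤ l.length :=
  Nat.sInf_le ⟨l, hl, hp, rfl⟩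

private lemma exists_abs_word (w : W) :
    ∃ l : List W, (∀ t ∈ l, cs.IsReflection t) ∧ l.prod = w ∧ l.length = cs.absLength w := by
  have hne : {n : ℕ | ∃ l : List W, (∀ t ∈ l, cs.IsReflection t) ∧ l.prod = w ∧ l.length = n}.Nonempty := by
    obtain ⟨ω, rfl⟩ := cs.wordProd_surjective w
    exact ⟨(ω.map cs.simple).length, ω.map cs.simple,
      fun t ht => by
        obtain ⟨i, _, rfl⟩ := List.mem_map.mp ht
        exact cs.isReflection_simple i,
      rfl, rfl⟩
  have := Nat.sInf_mem hne
  obtain ⟨l, h1, h2, h3⟩ := this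
  exact ⟨l, h1, h2, h3⟩

private lemma absLength_one' : cs.absLength (1 : W) = 0 :=
  Nat.le_zero.mp (cs.absLength_le' (l := []) (by simp) (by simp))

private lemma absLength_mul_le' (u v : W) :
    cs.absLength (u * v) ≤ cs.absLength u + cs.absLength v := by
  obtain ⟨l1, h1, hp1, hl1⟩ := cs.exists_abs_word u
  obtain ⟨l2, h2, hp2, hl2⟩ := cs.exists_abs_word v
  have := cs.absLength_le' (l := l1 ++ l2)
    (fun t ht => by rcases List.mem_append.mp ht with h | h; exacts [h1 t h, h2 t h])
    (by rw [List.prod_append, hp1, hp2])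
  simpa [hl1, hl2] using this

private lemma absLength_inv_le (w : W) : cs.absLength w⁻¹ ≤ cs.absLength w := by
  obtain ⟨l, h1, hp, hl⟩ := cs.exists_abs_word w
  have := cs.absLength_le' (l := (l.map fun x => x⁻¹).reverse)
    (fun t ht => by
      obtain ⟨x, hx, rfl⟩ := List.mem_map.mp (List.mem_reverse.mp ht)
      exact (h1 x hx).isReflection_inv)
    (by rw [← List.prod_inv_reverse, hp])
  simpa [hl] using this

private lemma absLength_inv' (w : W) : cs.absLength w⁻¹ = cs.absLength w :=
  le_antisymm (cs.absLength_inv_le w) (by simpa using cs.absLength_inv_le w⁻¹)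

private lemma conj_prod (u : W) : ∀ l : List W,
    (l.map fun t => u * t * u⁻¹).prod = u * l.prod * u⁻¹
  | [] => by simp
  | a :: l => by
    simp only [List.map_cons, List.prod_cons, conj_prod u l]
    group

private lemma absLength_conj_le (u w : W) :
    cs.absLength (u * w * u⁻¹) ≤ cs.absLength w := by
  obtain ⟨l, h1, hp, hl⟩ := cs.exists_abs_word w
  have := cs.absLength_le' (l := l.map fun t => u * t * u⁻¹)
    (fun t ht => by
      obtain ⟨x, hx, rfl⟩ := List.mem_map.mp ht
      exact (h1 x hx).conj u)
    (by rw [conj_prod, hp])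
  simpa [hl] using this

private lemma absLength_conj' (u w : W) :
    cs.absLength (u * w * u⁻¹) = cs.absLength w := by
  refine le_antisymm (cs.absLength_conj_le u w) ?_
  have := cs.absLength_conj_le u⁻¹ (u * w * u⁻¹)
  have h : u⁻¹ * (u * w * u⁻¹) * u⁻¹⁻¹ = w := by group
  rwa [h] at this

private lemma absLe_of_le {u w : W}
    (h : cs.absLength u + cs.absLength (u⁻¹ * w) ≤ cs.absLength w) : cs.absLe u w := by
  refine le_antisymm h ?_
  have := cs.absLength_mul_le' u (u⁻¹ * w)
  simpa using this

private lemma absLe_one' (w : W) : cs.absLe 1 w := by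
  simp [absLe, cs.absLength_one']

private lemma absLe_refl' (w : W) : cs.absLe w w := by
  simp [absLe, cs.absLength_one']

/-- From `u ≤ v`, the "complement on the right": `ℓ(v u⁻¹) + ℓ(u) = ℓ(v)`. -/
private lemma step_len {u v : W} (h : cs.absLe u v) :
    cs.absLength (v * u⁻¹) + cs.absLength u = cs.absLength v := by
  have hc : cs.absLength (u⁻¹ * v) = cs.absLength (v * u⁻¹) := by
    have := cs.absLength_conj' u⁻¹ (v * u⁻¹)
    have he : u⁻¹ * (v * u⁻¹) * u⁻¹⁻¹ = u⁻¹ * v := by group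
    rw [he] at this
    exact this
  unfold absLe at h
  omega

private lemma prod_len_le (l : List W) :
    cs.absLength l.prod ≤ (l.map cs.absLength).sum := by
  induction l with
  | nil => simp [cs.absLength_one']
  | cons a l ih =>
    simp only [List.prod_cons, List.map_cons, List.sum_cons]
    exact le_trans (cs.absLength_mul_le' a l.prod) (Nat.add_le_add_left ih _)

end CoxeterSystem

section ListAux

variable {W : Type*} [Group W]

private lemma telescope_range' (f : ℕ → W) :
    ∀ (n a : ℕ), ((List.range' a n).map (fun k => f k * (f (k + 1))⁻¹)).prod
      = f a * (f (a + n))⁻¹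
  | 0, a => by simp
  | n + 1, a => by
    rw [List.range'_succ, List.map_cons, List.prod_cons, telescope_range' f n (a + 1)]
    have : a + (n + 1) = a + 1 + n := by omega
    rw [this]
    group

private lemma telescope_ofFn (f : ℕ → W) :
    ∀ n : ℕ, (List.ofFn (fun i : Fin n => f i.val * (f (i.val + 1))⁻¹)).prod
      = f 0 * (f n)⁻¹
  | 0 => by simp
  | n + 1 => by
    rw [List.ofFn_succ, List.prod_cons]
    have : (List.ofFn fun i : Fin n =>
        f (i.succ.val) * (f (i.succ.val + 1))⁻¹).prod
        = (fun k => f (k + 1)) 0 * ((fun k => f (k + 1)) n)⁻¹ := by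
      have h := telescope_ofFn (fun k => f (k + 1)) n
      simpa [Fin.val_succ] using h
    rw [this]
    simp only [Fin.val_zero]
    group

private lemma ofFn_eq_range'_map {α : Type*} (d : α) {n : ℕ} (f : Fin n → α) :
    List.ofFn f = (List.range' 0 n).map (fun k => if h : k < n then f ⟨k, h⟩ else d) := by
  apply List.ext_getElem
  · simp
  · intro i h1 h2
    simp only [List.getElem_ofFn, List.getElem_map, List.getElem_range']
    have hi : i < n := by simpa using h1
    simp [hi]

private lemma range'_split {a b n : ℕ} (h : b ≤ n) :
    List.range' a n = List.range' a b ++ List.range' (a + b) (n - b) := by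
  have := (List.range'_append_1 : List.range' a b ++ List.range' (a + b) (n - b) = _)
  rw [show b + (n - b) = n by omega] at this
  exact this.symm

private lemma mem_range'_bounds {k a n : ℕ} (h : k ∈ List.range' a n) :
    a ≤ k ∧ k < a + n := by
  obtain ⟨i, hi, rfl⟩ := List.mem_range'.mp h
  omega

end ListAux

end AbsAux

section KeyLen

variable {B W : Type*} [Group W] {M : CoxeterMatrix B} (cs : CoxeterSystem M W)

private lemma range'_split' {a b N : ℕ} (h1 : a ≤ b) (h2 : b ≤ N) :
    List.range' a (N - a) = List.range' a (b - a) ++ List.range' b (N - b) := by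
  have := range'_split (a := a) (b := b - a) (n := N - a) (by omega)
  rwa [show a + (b - a) = b by omega, show N - a - (b - a) = N - b by omega] at this

private lemma keylen (g : ℕ → W) (N : ℕ)
    (hsum : ((List.range' 0 N).map fun k => cs.absLength (g k)).sum
      = cs.absLength (((List.range' 0 N).map g).prod)) :
    ∀ j k, j ≤ k → k ≤ N →
      cs.absLe (((List.range' k (N - k)).map g).prod)
        (((List.range' j (N - j)).map g).prod) := by
  have hprodle : ∀ l : List ℕ, cs.absLength ((l.map g).prod)
      ≤ (l.map fun k => cs.absLength (g k)).sum := by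
    intro l
    have := cs.prod_len_le (l.map g)
    rwa [List.map_map] at this
  have hlen : ∀ a, a ≤ N →
      cs.absLength (((List.range' a (N - a)).map g).prod)
        = ((List.range' a (N - a)).map fun k => cs.absLength (g k)).sum := by
    intro a ha
    have hspl := range'_split' (Nat.zero_le a) ha
    rw [Nat.sub_zero] at hspl
    have h1 := hprodle (List.range' a (N - a))
    have h2 := hprodle (List.range' 0 (a - 0))
    have h3 : cs.absLength (((List.range' 0 N).map g).prod)
        ≤ cs.absLength (((List.range' 0 (a - 0)).map g).prod)
          + cs.absLength (((List.range' a (N - a)).map g).prod) := by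
      rw [hspl, List.map_append, List.prod_append]
      exact cs.absLength_mul_le' _ _
    have h4 : ((List.range' 0 N).map fun k => cs.absLength (g k)).sum
        = ((List.range' 0 (a - 0)).map fun k => cs.absLength (g k)).sum
          + ((List.range' a (N - a)).map fun k => cs.absLength (g k)).sum := by
      rw [hspl, List.map_append, List.sum_append]
    omega
  intro j k hjk hkN
  have hjN : j ≤ N := le_trans hjk hkN
  have hspl := range'_split' hjk hkN
  apply cs.absLe_of_le
  have hQ : ((List.range' j (N - j)).map g).prod
      = ((List.range' j (k - j)).map g).prod * ((List.range' k (N - k)).map g).prod := by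
    rw [hspl, List.map_append, List.prod_append]
  have hconj : cs.absLength ((((List.range' k (N - k)).map g).prod)⁻¹
        * ((List.range' j (N - j)).map g).prod)
      ≤ cs.absLength (((List.range' j (k - j)).map g).prod) := by
    rw [hQ]
    have he : (((List.range' k (N - k)).map g).prod)⁻¹
          * (((List.range' j (k - j)).map g).prod * ((List.range' k (N - k)).map g).prod)
        = (((List.range' k (N - k)).map g).prod)⁻¹
          * ((List.range' j (k - j)).map g).prod
          * ((((List.range' k (N - k)).map g).prod)⁻¹)⁻¹ := by group
    rw [he]
    exact cs.absLength_conj_le _ _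
  have hQle := hprodle (List.range' j (k - j))
  have hTsplit : ((List.range' j (N - j)).map fun k => cs.absLength (g k)).sum
      = ((List.range' j (k - j)).map fun k => cs.absLength (g k)).sum
        + ((List.range' k (N - k)).map fun k => cs.absLength (g k)).sum := by
    rw [hspl, List.map_append, List.sum_append]
  have h5 := hlen j hjN
  have h6 := hlen k hkN
  omega

end KeyLen


/-- The map `(w₁ ≥_R ⋯ ≥_R w_m) ↦ (c w₁⁻¹, w₁w₂⁻¹, …, w_{m−1}w_m⁻¹, w_m)` is a bijection
between `m`-multichains in `NC(W, c)` and `m`-delta sequences, with inverse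
`(δ₀, …, δ_m) ↦ (δ₁⋯δ_m ≥_R δ₂⋯δ_m ≥_R ⋯ ≥_R δ_m)`. -/
theorem multichain_deltaSequence_bijection {B W : Type*} [Group W]
    (M : CoxeterMatrix B) (cs : CoxeterSystem M W) [Finite W] (m : ℕ) (c : W)
    (hc : cs.IsCoxeterElement c) :
    (∀ w ∈ cs.multichainSet m c, chainToDelta m c w ∈ cs.deltaSet m c) ∧
    (∀ δ ∈ cs.deltaSet m c, deltaToChain m δ ∈ cs.multichainSet m c) ∧
    (∀ w ∈ cs.multichainSet m c, deltaToChain m (chainToDelta m c w) = w) ∧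
    (∀ δ ∈ cs.deltaSet m c, chainToDelta m c (deltaToChain m δ) = δ) := by
  clear hc
  refine ⟨?_, ?_, ?_, ?_⟩
  · -- chain → delta
    rintro w ⟨hwc, hchain⟩
    set x : ℕ → W := chainExt m c w with hxdef
    have hx0 : x 0 = c := by simp [hxdef, chainExt]
    have hxtop : ∀ k, m < k → x k = 1 := by
      intro k hk
      simp only [hxdef, chainExt]
      rw [dif_neg (by omega), if_neg (by omega)]
    have hxmid : ∀ k (h1 : 1 ≤ k) (h2 : k ≤ m), x k = w ⟨k - 1, by omega⟩ := by
      intro k h1 h2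
      simp only [hxdef, chainExt]
      rw [dif_pos ⟨h1, h2⟩]
    have hstep : ∀ k, cs.absLe (x (k + 1)) (x k) := by
      intro k
      by_cases hk : m < k + 1
      · rw [hxtop _ hk]; exact cs.absLe_one' _
      · push_neg at hk
        rw [hxmid (k + 1) (by omega) hk]
        rcases Nat.eq_zero_or_pos k with h0 | h0
        · subst h0
          rw [hx0]
          exact hwc _
        · rw [hxmid k h0 (by omega)]
          refine hchain ⟨k - 1, by omega⟩ ⟨k + 1 - 1, by omega⟩ ?_
          show k - 1 ≤ k + 1 - 1
          omega
    have hxc : ∀ k, cs.absLe (x k) c := by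
      intro k
      rcases Nat.eq_zero_or_pos k with h0 | h0
      · subst h0; rw [hx0]; exact cs.absLe_refl' c
      · by_cases hk : k ≤ m
        · rw [hxmid k h0 hk]; exact hwc _
        · rw [hxtop k (by omega)]; exact cs.absLe_one' c
    have hdel : ∀ k, cs.absLength (x k * (x (k + 1))⁻¹) + cs.absLength (x (k + 1))
        = cs.absLength (x k) := fun k => cs.step_len (hstep k)
    have hsum : ∀ n : ℕ, (∑ i ∈ Finset.range n, cs.absLength (x i * (x (i + 1))⁻¹))
        + cs.absLength (x n) = cs.absLength (x 0) := by
      intro n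
      induction n with
      | zero => simp
      | succ n ih =>
        rw [Finset.sum_range_succ]
        have := hdel n
        omega
    refine ⟨?_, ?_, ?_⟩
    · intro i
      show cs.absLe (x i.val * (x (i.val + 1))⁻¹) c
      apply cs.absLe_of_le
      have h1 := hdel i.val
      have h2 : cs.absLength (x i.val) + cs.absLength ((x i.val)⁻¹ * c) = cs.absLength c :=
        hxc i.val
      have h3 : cs.absLength ((x i.val * (x (i.val + 1))⁻¹)⁻¹ * c)
          ≤ cs.absLength (x (i.val + 1)) + cs.absLength ((x i.val)⁻¹ * c) := by
        have he : (x i.val * (x (i.val + 1))⁻¹)⁻¹ * c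
            = x (i.val + 1) * ((x i.val)⁻¹ * c) := by group
        rw [he]
        exact cs.absLength_mul_le' _ _
      omega
    · show (List.ofFn (fun i : Fin (m + 1) => x i.val * (x (i.val + 1))⁻¹)).prod = c
      rw [telescope_ofFn x (m + 1), hx0, hxtop (m + 1) (by omega)]
      simp
    · have h1 : (∑ i : Fin (m + 1), cs.absLength (chainToDelta m c w i))
          = ∑ i ∈ Finset.range (m + 1), cs.absLength (x i * (x (i + 1))⁻¹) :=
        Fin.sum_univ_eq_sum_range (fun k => cs.absLength (x k * (x (k + 1))⁻¹)) (m + 1)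
      rw [h1]
      have h2 := hsum (m + 1)
      rw [hxtop (m + 1) (by omega), cs.absLength_one', hx0] at h2
      omega
  · -- delta → chain
    rintro δ ⟨-, hprod, hsum⟩
    set g : ℕ → W := fun k => if h : k < m + 1 then δ ⟨k, h⟩ else 1 with hgdef
    have hprod' : ((List.range' 0 (m + 1)).map g).prod = c := by
      rw [hgdef, ← ofFn_eq_range'_map (1 : W) δ]
      exact hprod
    have hsum' : ((List.range' 0 (m + 1)).map fun k => cs.absLength (g k)).sum
        = cs.absLength (((List.range' 0 (m + 1)).map g).prod) := by
      rw [hprod', ← hsum, ← List.sum_ofFn,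
        ofFn_eq_range'_map 0 (fun i : Fin (m + 1) => cs.absLength (δ i))]
      refine congrArg List.sum (List.map_congr_left ?_)
      intro k hk
      obtain ⟨-, hk2⟩ := mem_range'_bounds hk
      have hklt : k < m + 1 := by omega
      simp only [hgdef]
      rw [dif_pos hklt, dif_pos hklt]
    have key := keylen cs g (m + 1) hsum'
    have hdc : ∀ j : Fin m, deltaToChain m δ j
        = ((List.range' (j.val + 1) (m + 1 - (j.val + 1))).map g).prod := by
      intro j
      rw [Nat.succ_sub_succ]
      rfl
    refine ⟨?_, ?_⟩
    · intro j
      rw [hdc j]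
      have h := key 0 (j.val + 1) (Nat.zero_le _) (by have := j.isLt; omega)
      rw [Nat.sub_zero, hprod'] at h
      exact h
    · intro j k hjk
      have hjk' : j.val ≤ k.val := hjk
      rw [hdc j, hdc k]
      exact key (j.val + 1) (k.val + 1) (by omega) (by have := k.isLt; omega)
  · -- deltaToChain ∘ chainToDelta = id
    rintro w -
    funext j
    set x : ℕ → W := chainExt m c w with hxdef
    show ((List.range' (j.val + 1) (m - j.val)).map
      (fun k => if h : k < m + 1 then chainToDelta m c w ⟨k, h⟩ else 1)).prod = w j
    have hj := j.isLt
    have hcongr : ((List.range' (j.val + 1) (m - j.val)).map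
        (fun k => if h : k < m + 1 then chainToDelta m c w ⟨k, h⟩ else 1))
        = ((List.range' (j.val + 1) (m - j.val)).map (fun k => x k * (x (k + 1))⁻¹)) := by
      refine List.map_congr_left ?_
      intro k hk
      obtain ⟨hk1, hk2⟩ := mem_range'_bounds hk
      have hklt : k < m + 1 := by omega
      rw [dif_pos hklt]
      exact rfl
    rw [hcongr, telescope_range' x (m - j.val) (j.val + 1),
      show j.val + 1 + (m - j.val) = m + 1 by omega]
    have hx1 : x (m + 1) = 1 := by
      simp only [hxdef, chainExt]
      rw [dif_neg (by omega), if_neg (by omega)]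
    have hx2 : x (j.val + 1) = w j := by
      simp only [hxdef, chainExt]
      rw [dif_pos ⟨by omega, by omega⟩]
      exact congrArg w (Fin.ext (by simp))
    rw [hx1, hx2]
    simp
  · -- chainToDelta ∘ deltaToChain = id
    rintro δ ⟨-, hprod, -⟩
    funext i
    set g : ℕ → W := fun k => if h : k < m + 1 then δ ⟨k, h⟩ else 1 with hgdef
    have hy0 : ((List.range' 0 (m + 1)).map g).prod = c := by
      rw [hgdef, ← ofFn_eq_range'_map (1 : W) δ]
      exact hprod
    have hw : ∀ j : Fin m, deltaToChain m δ j
        = ((List.range' (j.val + 1) (m + 1 - (j.val + 1))).map g).prod := by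
      intro j
      rw [Nat.succ_sub_succ]
      rfl
    have hXy : ∀ k, k ≤ m + 1 → chainExt m c (deltaToChain m δ) k
        = ((List.range' k (m + 1 - k)).map g).prod := by
      intro k hk
      rcases Nat.eq_zero_or_pos k with h0 | h0
      · subst h0
        rw [Nat.sub_zero, hy0]
        simp [chainExt]
      · by_cases hk2 : k ≤ m
        · have h1 : chainExt m c (deltaToChain m δ) k = deltaToChain m δ ⟨k - 1, by omega⟩ := by
            simp only [chainExt]
            rw [dif_pos ⟨h0, hk2⟩]
          rw [h1, hw ⟨k - 1, by omega⟩]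
          rw [show k - 1 + 1 = k by omega]
        · have hk3 : k = m + 1 := by omega
          subst hk3
          rw [Nat.sub_self]
          simp only [chainExt]
          rw [dif_neg (by omega), if_neg (by omega)]
          simp
    show chainExt m c (deltaToChain m δ) i.val
        * (chainExt m c (deltaToChain m δ) (i.val + 1))⁻¹ = δ i
    rw [hXy i.val (le_of_lt i.isLt), hXy (i.val + 1) i.isLt]
    have hsucc : ((List.range' i.val (m + 1 - i.val)).map g).prod
        = g i.val * ((List.range' (i.val + 1) (m + 1 - (i.val + 1))).map g).prod := by
      rw [show m + 1 - i.val = (m + 1 - (i.val + 1)) + 1 by have := i.isLt; omega,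
        List.range'_succ, List.map_cons, List.prod_cons]
    rw [hsucc]
    have hg : g i.val = δ i := by
      simp only [hgdef]
      rw [dif_pos i.isLt]
    rw [mul_inv_cancel_right]
    exact hg
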